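/- Let G be a finite simple bipartite graph, let S be a local maximum stable set of G, and let M be a maximum matching of the subgraph of G induced by N[S]. Then there exists a maximum matching M₀ of G with M ⊆ M₀. -/

import Mathlib

open Finset
open scoped Classical

/-- `S` is a stable (independent) set of `G`. -/
def IsStableSet {V : Type*} (G : SimpleGraph V) (S : Finset V) : Prop :=
  ∀ u ∈ S, ∀ v ∈ S, ¬ G.Adj u v

/-- `S` is a maximum stable set of `G`. -/
def IsMaxStableSet {V : Type*} [Fintype V] (G : SimpleGraph V) (S : Finset V) : Prop :=
  IsStableSet G S ∧ ∀ T : Finset V, IsStableSet G T → T.card ≤ S.card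

/-- The closed neighborhood `N[S]` of a set `S` of vertices of `G`. -/
noncomputable def closedNbhd {V : Type*} [Fintype V] (G : SimpleGraph V) (S : Finset V) :
    Finset V :=
  S ∪ Finset.univ.filter (fun v => ∃ u ∈ S, G.Adj u v)

/-- `S` is a local maximum stable set of `G`: it is a maximum stable set of the subgraph
of `G` induced by `N[S]`, i.e. it is stable and no stable set contained in `N[S]` is larger. -/
def IsLocalMaxStableSet {V : Type*} [Fintype V] (G : SimpleGraph V) (S : Finset V) : Prop :=
  IsStableSet G S ∧
    ∀ T : Finset V, IsStableSet G T → T ⊆ closedNbhd G S → T.card ≤ S.card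

/-- `M` is a matching of `G`: a set of pairwise disjoint edges of `G`. -/
def IsMatching {V : Type*} (G : SimpleGraph V) (M : Finset (Sym2 V)) : Prop :=
  (∀ e ∈ M, e ∈ G.edgeSet) ∧
    ∀ e ∈ M, ∀ f ∈ M, e ≠ f → ∀ v : V, v ∈ e → v ∉ f

/-- `M` is a maximum matching of `G`. -/
def IsMaxMatching {V : Type*} [Fintype V] (G : SimpleGraph V) (M : Finset (Sym2 V)) : Prop :=
  IsMatching G M ∧ ∀ N : Finset (Sym2 V), IsMatching G N → N.card ≤ M.card

/-- `M` is a matching of the subgraph of `G` induced by the vertex set `A`, i.e. a matching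
of `G` all of whose edges have both endpoints in `A`. -/
def IsMatchingOn {V : Type*} (G : SimpleGraph V) (A : Finset V) (M : Finset (Sym2 V)) : Prop :=
  IsMatching G M ∧ ∀ e ∈ M, ∀ v : V, v ∈ e → v ∈ A

/-- `M` is a maximum matching of the subgraph of `G` induced by `A`. -/
def IsMaxMatchingOn {V : Type*} [Fintype V] (G : SimpleGraph V) (A : Finset V)
    (M : Finset (Sym2 V)) : Prop :=
  IsMatchingOn G A M ∧ ∀ N : Finset (Sym2 V), IsMatchingOn G A N → N.card ≤ M.card

/-- The stability number `α` of the subgraph of `G` induced by `A`. -/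
noncomputable def stabNumOn {V : Type*} [Fintype V] (G : SimpleGraph V) (A : Finset V) : ℕ :=
  sSup {n | ∃ S : Finset V, S ⊆ A ∧ IsStableSet G S ∧ S.card = n}

/-- The matching number `μ` of the subgraph of `G` induced by `A`. -/
noncomputable def matchNumOn {V : Type*} [Fintype V] (G : SimpleGraph V) (A : Finset V) : ℕ :=
  sSup {n | ∃ M : Finset (Sym2 V), IsMatchingOn G A M ∧ M.card = n}

/-- The stability number `α(G)`. -/
noncomputable def stabNum {V : Type*} [Fintype V] (G : SimpleGraph V) : ℕ :=
  stabNumOn G Finset.univ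

/-- The matching number `μ(G)`. -/
noncomputable def matchNum {V : Type*} [Fintype V] (G : SimpleGraph V) : ℕ :=
  matchNumOn G Finset.univ

/-- `G` is a König–Egerváry graph: `α(G) + μ(G) = |V(G)|`. -/
def IsKonigEgervary {V : Type*} [Fintype V] (G : SimpleGraph V) : Prop :=
  stabNum G + matchNum G = Fintype.card V

/-- The subgraph of `G` induced by `A` is a König–Egerváry graph:
`α(G[A]) + μ(G[A]) = |A|`. -/
def IsKonigEgervaryOn {V : Type*} [Fintype V] (G : SimpleGraph V) (A : Finset V) : Prop :=
  stabNumOn G A + matchNumOn G A = A.card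


section AuxLemmas

variable {V : Type*} [Fintype V]

lemma mem_closedNbhd' {G : SimpleGraph V} {S : Finset V} {v : V} :
    v ∈ closedNbhd G S ↔ v ∈ S ∨ ∃ u ∈ S, G.Adj u v := by
  simp [closedNbhd]

lemma exists_max_stable_superset (G : SimpleGraph V) (S : Finset V)
    (hS : IsLocalMaxStableSet G S) :
    ∃ A : Finset V, S ⊆ A ∧ IsStableSet G A ∧
      ∀ T : Finset V, IsStableSet G T → T.card ≤ A.card := by
  obtain ⟨A₀, hA₀mem, hA₀max⟩ := Finset.exists_max_image
      (Finset.univ.powerset.filter (fun T => IsStableSet G T)) Finset.card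
      ⟨∅, by simp [IsStableSet]⟩
  have hA₀stab : IsStableSet G A₀ := (Finset.mem_filter.mp hA₀mem).2
  refine ⟨(A₀ \ closedNbhd G S) ∪ S, Finset.subset_union_right, ?_, ?_⟩
  · intro u hu v hv hadj
    rcases Finset.mem_union.mp hu with hu | hu
    · rcases Finset.mem_union.mp hv with hv | hv
      · exact hA₀stab u (Finset.mem_sdiff.mp hu).1 v (Finset.mem_sdiff.mp hv).1 hadj
      · exact (Finset.mem_sdiff.mp hu).2 (mem_closedNbhd'.mpr (Or.inr ⟨v, hv, hadj.symm⟩))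
    · rcases Finset.mem_union.mp hv with hv | hv
      · exact (Finset.mem_sdiff.mp hv).2 (mem_closedNbhd'.mpr (Or.inr ⟨u, hu, hadj⟩))
      · exact hS.1 u hu v hv hadj
  · intro T hT
    have hT' : T.card ≤ A₀.card := hA₀max T
      (Finset.mem_filter.mpr ⟨Finset.mem_powerset.mpr (Finset.subset_univ T), hT⟩)
    have h1 : (A₀ ∩ closedNbhd G S).card ≤ S.card := by
      refine hS.2 _ ?_ Finset.inter_subset_right
      intro u hu v hv hadj
      exact hA₀stab u (Finset.mem_inter.mp hu).1 v (Finset.mem_inter.mp hv).1 hadj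
    have h2 : (A₀ \ closedNbhd G S).card + (A₀ ∩ closedNbhd G S).card = A₀.card :=
      Finset.card_sdiff_add_card_inter _ _
    have h3 : ((A₀ \ closedNbhd G S) ∪ S).card = (A₀ \ closedNbhd G S).card + S.card := by
      refine Finset.card_union_of_disjoint (Finset.disjoint_left.mpr ?_)
      intro a ha haS
      exact (Finset.mem_sdiff.mp ha).2 (mem_closedNbhd'.mpr (Or.inl haS))
    omega

lemma matching_card_le (Mset : Finset (Sym2 V))
    (hdisj : ∀ e ∈ Mset, ∀ f ∈ Mset, e ≠ f → ∀ v : V, v ∈ e → v ∉ f)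
    (Cset : Finset V) (hcov : ∀ e ∈ Mset, ∃ v, v ∈ Cset ∧ v ∈ e) :
    Mset.card ≤ Cset.card := by
  rcases Mset.eq_empty_or_nonempty with rfl | ⟨e₀, he₀⟩
  · simp
  · have hV : Nonempty V := ⟨(hcov e₀ he₀).choose⟩
    choose g hg1 hg2 using hcov
    refine Finset.card_le_card_of_injOn
      (fun e => if h : e ∈ Mset then g e h else Classical.arbitrary V) ?_ ?_
    · intro e he
      simp only [dif_pos (show e ∈ Mset from he)]
      exact hg1 e he
    · intro e₁ he₁ e₂ he₂ heq
      have he₁' : e₁ ∈ Mset := he₁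
      have he₂' : e₂ ∈ Mset := he₂
      simp only [dif_pos he₁', dif_pos he₂'] at heq
      by_contra hne
      exact hdisj e₁ he₁' e₂ he₂' hne (g e₁ he₁') (hg2 e₁ he₁') (heq ▸ hg2 e₂ he₂')

lemma konig_aux (G : SimpleGraph V) (col : V → Fin 2)
    (hcol : ∀ {u v : V}, G.Adj u v → col u ≠ col v)
    (W A : Finset V) (hAW : A ⊆ W) (hAstab : IsStableSet G A)
    (hAmax : ∀ T : Finset V, IsStableSet G T → T ⊆ W → T.card ≤ A.card) (i : Fin 2) :
    ∃ φ : V → V,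
      (∀ c ∈ (W \ A).filter (fun v => col v = i),
        ∀ c' ∈ (W \ A).filter (fun v => col v = i), φ c = φ c' → c = c') ∧
      ∀ c ∈ (W \ A).filter (fun v => col v = i), φ c ∈ A ∧ G.Adj c (φ c) := by
  set Ci := (W \ A).filter (fun v => col v = i) with hCi
  set t : {x // x ∈ Ci} → Finset V := fun c => A.filter (fun v => G.Adj c.1 v) with ht
  have hall : ∀ s : Finset {x // x ∈ Ci}, s.card ≤ (s.biUnion t).card := by
    intro s
    by_contra hlt
    push_neg at hlt
    set X := s.image (fun c => c.1) with hX
    set NX := s.biUnion t with hNX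
    have hXcard : X.card = s.card := Finset.card_image_of_injective _ Subtype.val_injective
    have hXCi : X ⊆ Ci := by
      intro x hx
      obtain ⟨c, _, rfl⟩ := Finset.mem_image.mp hx
      exact c.2
    have hXsub : X ⊆ W \ A := fun x hx => (Finset.mem_filter.mp (hXCi hx)).1
    have hNXA : NX ⊆ A := by
      intro v hv
      obtain ⟨c, _, hv⟩ := Finset.mem_biUnion.mp hv
      exact (Finset.mem_filter.mp hv).1
    set T := W \ (((W \ A) \ X) ∪ NX) with hT
    have hTstab : IsStableSet G T := by
      intro u hu v hv hadj
      obtain ⟨huW, huC⟩ := Finset.mem_sdiff.mp hu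
      obtain ⟨hvW, hvC⟩ := Finset.mem_sdiff.mp hv
      rw [Finset.mem_union, not_or] at huC hvC
      have hcase : ∀ w, w ∈ W → w ∉ ((W \ A) \ X) → w ∈ A ∨ w ∈ X := by
        intro w hw hw'
        by_cases hwA : w ∈ A
        · exact Or.inl hwA
        · right
          by_contra hwX
          exact hw' (Finset.mem_sdiff.mpr ⟨Finset.mem_sdiff.mpr ⟨hw, hwA⟩, hwX⟩)
      rcases hcase u huW huC.1 with huA | huX
      · rcases hcase v hvW hvC.1 with hvA | hvX
        · exact hAstab u huA v hvA hadj
        · obtain ⟨c, hc, hcv⟩ := Finset.mem_image.mp hvX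
          refine huC.2 (Finset.mem_biUnion.mpr ⟨c, hc, Finset.mem_filter.mpr ⟨huA, ?_⟩⟩)
          rw [hcv]; exact hadj.symm
      · rcases hcase v hvW hvC.1 with hvA | hvX
        · obtain ⟨c, hc, hcu⟩ := Finset.mem_image.mp huX
          refine hvC.2 (Finset.mem_biUnion.mpr ⟨c, hc, Finset.mem_filter.mpr ⟨hvA, ?_⟩⟩)
          rw [hcu]; exact hadj
        · have h1 : col u = i := (Finset.mem_filter.mp (hXCi huX)).2
          have h2 : col v = i := (Finset.mem_filter.mp (hXCi hvX)).2
          exact hcol hadj (h1.trans h2.symm)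
    have hTcard : T.card ≤ A.card := hAmax T hTstab Finset.sdiff_subset
    have c1 : ((W \ A) \ X).card = (W \ A).card - X.card := Finset.card_sdiff_of_subset hXsub
    have c2 : (W \ A).card = W.card - A.card := Finset.card_sdiff_of_subset hAW
    have c3 : (((W \ A) \ X) ∪ NX).card ≤ ((W \ A) \ X).card + NX.card := Finset.card_union_le _ _
    have c4 : W.card ≤ T.card + (((W \ A) \ X) ∪ NX).card := Finset.card_le_card_sdiff_add_card
    have c5 : X.card ≤ (W \ A).card := Finset.card_le_card hXsub
    have c6 : A.card ≤ W.card := Finset.card_le_card hAW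
    omega
  obtain ⟨f, hfinj, hft⟩ := (Finset.all_card_le_biUnion_card_iff_exists_injective t).mp hall
  refine ⟨fun v => if h : v ∈ Ci then f ⟨v, h⟩ else v, ?_, ?_⟩
  · intro c hc c' hc' heq
    simp only [dif_pos hc, dif_pos hc'] at heq
    exact congrArg Subtype.val (hfinj heq)
  · intro c hc
    simp only [dif_pos hc]
    have hmem := hft ⟨c, hc⟩
    exact ⟨(Finset.mem_filter.mp hmem).1, (Finset.mem_filter.mp hmem).2⟩

lemma konig (G : SimpleGraph V) (hbip : G.Colorable 2)
    (W A : Finset V) (hAW : A ⊆ W) (hAstab : IsStableSet G A)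
    (hAmax : ∀ T : Finset V, IsStableSet G T → T ⊆ W → T.card ≤ A.card) :
    ∃ φ : V → V, (∀ c ∈ W \ A, ∀ c' ∈ W \ A, φ c = φ c' → c = c') ∧
      ∀ c ∈ W \ A, φ c ∈ A ∧ G.Adj c (φ c) := by
  obtain ⟨col⟩ := hbip
  have hcol : ∀ {u v : V}, G.Adj u v → col u ≠ col v := fun h => col.valid h
  obtain ⟨φ₀, hinj₀, hφ₀⟩ := konig_aux G col hcol W A hAW hAstab hAmax 0
  obtain ⟨φ₁, hinj₁, hφ₁⟩ := konig_aux G col hcol W A hAW hAstab hAmax 1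
  have h2 : ∀ x : Fin 2, x = 0 ∨ x = 1 := by decide
  refine ⟨fun v => if col v = 0 then φ₀ v else φ₁ v, ?_, ?_⟩
  · intro c hc c' hc' heq
    simp only at heq
    rcases h2 (col c) with h | h <;> rcases h2 (col c') with h' | h'
    · rw [if_pos h, if_pos h'] at heq
      exact hinj₀ c (Finset.mem_filter.mpr ⟨hc, h⟩) c' (Finset.mem_filter.mpr ⟨hc', h'⟩) heq
    · rw [if_pos h, if_neg (h' ▸ one_ne_zero)] at heq
      have k1 : col (φ₀ c) ≠ 0 := fun hcc =>
        hcol (hφ₀ c (Finset.mem_filter.mpr ⟨hc, h⟩)).2 (h.trans hcc.symm)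
      have k2 : col (φ₁ c') ≠ 1 := fun hcc =>
        hcol (hφ₁ c' (Finset.mem_filter.mpr ⟨hc', h'⟩)).2 (h'.trans hcc.symm)
      rw [heq] at k1
      rcases h2 (col (φ₁ c')) with hk | hk
      · exact absurd hk k1
      · exact absurd hk k2
    · rw [if_neg (h ▸ one_ne_zero), if_pos h'] at heq
      have k1 : col (φ₀ c') ≠ 0 := fun hcc =>
        hcol (hφ₀ c' (Finset.mem_filter.mpr ⟨hc', h'⟩)).2 (h'.trans hcc.symm)
      have k2 : col (φ₁ c) ≠ 1 := fun hcc =>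
        hcol (hφ₁ c (Finset.mem_filter.mpr ⟨hc, h⟩)).2 (h.trans hcc.symm)
      rw [← heq] at k1
      rcases h2 (col (φ₁ c)) with hk | hk
      · exact absurd hk k1
      · exact absurd hk k2
    · rw [if_neg (h ▸ one_ne_zero), if_neg (h' ▸ one_ne_zero)] at heq
      exact hinj₁ c (Finset.mem_filter.mpr ⟨hc, h⟩) c' (Finset.mem_filter.mpr ⟨hc', h'⟩) heq
  · intro c hc
    rcases h2 (col c) with h | h
    · simp only [if_pos h]
      exact hφ₀ c (Finset.mem_filter.mpr ⟨hc, h⟩)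
    · simp only [if_neg (h ▸ one_ne_zero)]
      exact hφ₁ c (Finset.mem_filter.mpr ⟨hc, h⟩)

lemma matching_of_map (G : SimpleGraph V) (φ : V → V) (D : Finset V)
    (hinj : ∀ c ∈ D, ∀ c' ∈ D, φ c = φ c' → c = c')
    (hadj : ∀ c ∈ D, G.Adj c (φ c))
    (hsep : ∀ c ∈ D, ∀ c' ∈ D, φ c ≠ c') :
    IsMatching G (D.image (fun c => s(c, φ c))) ∧
      (D.image (fun c => s(c, φ c))).card = D.card := by
  have key : ∀ c ∈ D, ∀ c' ∈ D, s(c, φ c) = s(c', φ c') → c = c' := by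
    intro c hc c' hc' h
    rw [Sym2.eq_iff] at h
    rcases h with ⟨h1, _⟩ | ⟨_, h2⟩
    · exact h1
    · exact absurd h2 (hsep c hc c' hc')
  refine ⟨⟨?_, ?_⟩, ?_⟩
  · intro e he
    obtain ⟨c, hc, rfl⟩ := Finset.mem_image.mp he
    exact (SimpleGraph.mem_edgeSet G).mpr (hadj c hc)
  · intro e he f hf hef v hve hvf
    obtain ⟨c, hc, rfl⟩ := Finset.mem_image.mp he
    obtain ⟨c', hc', rfl⟩ := Finset.mem_image.mp hf
    have hcc' : c ≠ c' := fun h => hef (by rw [h])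
    rcases Sym2.mem_iff.mp hve with h1 | h1 <;> rcases Sym2.mem_iff.mp hvf with h2 | h2
    · exact hcc' (h1.symm.trans h2)
    · exact hsep c' hc' c hc (h2.symm.trans h1)
    · exact hsep c hc c' hc' (h1.symm.trans h2)
    · exact hcc' (hinj c hc c' hc' (h1.symm.trans h2))
  · exact Finset.card_image_of_injOn (fun a ha b hb h => key a ha b hb h)

end AuxLemmas

/-- if `G` is bipartite, `S` is a local maximum stable set of `G`, and `M` is
a maximum matching of the subgraph of `G` induced by `N[S]`, then `M` extends to a maximum
matching of `G`. -/
theorem maxMatching_extends_to_maxMatching_of_bipartite {V : Type*} [Fintype V]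
    (G : SimpleGraph V) (hbip : G.Colorable 2) (S : Finset V)
    (hS : IsLocalMaxStableSet G S)
    (M : Finset (Sym2 V)) (hM : IsMaxMatchingOn G (closedNbhd G S) M) :
    ∃ M₀ : Finset (Sym2 V), IsMaxMatching G M₀ ∧ M ⊆ M₀ := by
  classical
  obtain ⟨A, hSA, hAstab, hAmax⟩ := exists_max_stable_superset G S hS
  set W := closedNbhd G S with hW
  set NS := W \ S with hNS
  set C := (Finset.univ : Finset V) \ A with hC
  have hSW : S ⊆ W := Finset.subset_union_left
  have hSNS : ∀ v ∈ S, v ∉ NS := fun v hv h => (Finset.mem_sdiff.mp h).2 hv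
  have hNSadj : ∀ v ∈ NS, ∃ u ∈ S, G.Adj u v := by
    intro v hv
    obtain ⟨hvW, hvS⟩ := Finset.mem_sdiff.mp hv
    rcases mem_closedNbhd'.mp hvW with h | h
    · exact absurd h hvS
    · exact h
  have hNSC : NS ⊆ C := by
    intro v hv
    obtain ⟨u, hu, hadj⟩ := hNSadj v hv
    exact Finset.mem_sdiff.mpr ⟨Finset.mem_univ v, fun hvA => hAstab u (hSA hu) v hvA hadj⟩
  have hWmem : ∀ v ∈ W, v ∈ S ∨ v ∈ NS := by
    intro v hv
    by_cases h : v ∈ S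
    · exact Or.inl h
    · exact Or.inr (Finset.mem_sdiff.mpr ⟨hv, h⟩)
  -- `M.card = NS.card`
  obtain ⟨ψ, hψinj, hψ⟩ := konig G hbip W S hSW hS.1 hS.2
  have hψS : ∀ c ∈ NS, ψ c ∈ S ∧ G.Adj c (ψ c) := fun c hc => hψ c hc
  have hψsep : ∀ c ∈ NS, ∀ c' ∈ NS, ψ c ≠ c' := fun c hc c' hc' h =>
    hSNS _ (hψS c hc).1 (h ▸ hc')
  obtain ⟨hMψ, hMψcard⟩ := matching_of_map G ψ NS (fun c hc c' hc' h => hψinj c hc c' hc' h)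
    (fun c hc => (hψS c hc).2) hψsep
  have hNS_le_M : NS.card ≤ M.card := by
    rw [← hMψcard]
    refine hM.2 _ ⟨hMψ, ?_⟩
    intro e he v hv
    obtain ⟨c, hc, rfl⟩ := Finset.mem_image.mp he
    rcases Sym2.mem_iff.mp hv with h | h
    · exact h ▸ (Finset.mem_sdiff.mp hc).1
    · exact h ▸ hSW (hψS c hc).1
  have hM_le_NS : M.card ≤ NS.card := by
    refine matching_card_le M hM.1.1.2 NS ?_
    intro e he
    have hedge : e ∈ G.edgeSet := hM.1.1.1 e he
    have hmemW : ∀ v ∈ e, v ∈ W := hM.1.2 e he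
    clear he
    revert hedge hmemW
    induction e using Sym2.ind with
    | _ u v =>
      intro hedge hmemW
      rw [SimpleGraph.mem_edgeSet] at hedge
      have hu : u ∈ W := hmemW u (Sym2.mem_mk_left u v)
      have hv : v ∈ W := hmemW v (Sym2.mem_mk_right u v)
      rcases hWmem u hu with huS | huNS
      · rcases hWmem v hv with hvS | hvNS
        · exact absurd hedge (hS.1 u huS v hvS)
        · exact ⟨v, hvNS, Sym2.mem_mk_right u v⟩
      · exact ⟨u, huNS, Sym2.mem_mk_left u v⟩
  have hMcard : M.card = NS.card := le_antisymm hM_le_NS hNS_le_M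
  -- build the big matching
  obtain ⟨φ, hφinj, hφ⟩ := konig G hbip Finset.univ A (Finset.subset_univ A) hAstab
    (fun T hT _ => hAmax T hT)
  set D := C \ NS with hD
  have hDC : D ⊆ C := Finset.sdiff_subset
  have hDnotA : ∀ c ∈ D, c ∉ A := fun c hc => (Finset.mem_sdiff.mp (hDC hc)).2
  have hφA : ∀ c ∈ D, φ c ∈ A ∧ G.Adj c (φ c) := fun c hc => hφ c (hDC hc)
  have hφnotS : ∀ c ∈ D, φ c ∉ S := by
    intro c hc hmem
    have hcW : c ∈ W := mem_closedNbhd'.mpr (Or.inr ⟨φ c, hmem, (hφA c hc).2.symm⟩)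
    have hcS : c ∉ S := fun h => hDnotA c hc (hSA h)
    exact (Finset.mem_sdiff.mp hc).2 (Finset.mem_sdiff.mpr ⟨hcW, hcS⟩)
  have hDnotW : ∀ c ∈ D, c ∉ W := by
    intro c hc hcW
    rcases hWmem c hcW with h | h
    · exact hDnotA c hc (hSA h)
    · exact (Finset.mem_sdiff.mp hc).2 h
  have hφnotW : ∀ c ∈ D, φ c ∉ W := by
    intro c hc hcW
    rcases hWmem _ hcW with h | h
    · exact hφnotS c hc h
    · exact (Finset.mem_sdiff.mp (hNSC h)).2 (hφA c hc).1
  have hφsep : ∀ c ∈ D, ∀ c' ∈ D, φ c ≠ c' := fun c hc c' hc' h =>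
    hDnotA c' hc' (h ▸ (hφA c hc).1)
  obtain ⟨hMimg, hMimgcard⟩ := matching_of_map G φ D
    (fun c hc c' hc' h => hφinj c (hDC hc) c' (hDC hc') h)
    (fun c hc => (hφA c hc).2) hφsep
  set Mimg := D.image (fun c => s(c, φ c)) with hMimg'
  have hMimgW : ∀ e ∈ Mimg, ∀ v ∈ e, v ∉ W := by
    intro e he v hv
    obtain ⟨c, hc, rfl⟩ := Finset.mem_image.mp he
    rcases Sym2.mem_iff.mp hv with h | h
    · exact h ▸ hDnotW c hc
    · exact h ▸ hφnotW c hc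
  have hdisjMM : Disjoint M Mimg := by
    rw [Finset.disjoint_left]
    intro e heM heI
    obtain ⟨c, hc, rfl⟩ := Finset.mem_image.mp heI
    exact hMimgW _ heI c (Sym2.mem_mk_left _ _) (hM.1.2 _ heM c (Sym2.mem_mk_left _ _))
  refine ⟨M ∪ Mimg, ⟨⟨?_, ?_⟩, ?_⟩, Finset.subset_union_left⟩
  · intro e he
    rcases Finset.mem_union.mp he with h | h
    · exact hM.1.1.1 e h
    · exact hMimg.1 e h
  · intro e he f hf hef v hve hvf
    rcases Finset.mem_union.mp he with he' | he' <;> rcases Finset.mem_union.mp hf with hf' | hf'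
    · exact hM.1.1.2 e he' f hf' hef v hve hvf
    · exact hMimgW f hf' v hvf (hM.1.2 e he' v hve)
    · exact hMimgW e he' v hve (hM.1.2 f hf' v hvf)
    · exact hMimg.2 e he' f hf' hef v hve hvf
  · intro N hN
    have hcover : ∀ e ∈ N, ∃ v, v ∈ C ∧ v ∈ e := by
      intro e he
      have hedge : e ∈ G.edgeSet := hN.1 e he
      clear he
      revert hedge
      induction e using Sym2.ind with
      | _ u v =>
        intro hedge
        rw [SimpleGraph.mem_edgeSet] at hedge
        by_cases huA : u ∈ A
        · by_cases hvA : v ∈ A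
          · exact absurd hedge (hAstab u huA v hvA)
          · exact ⟨v, Finset.mem_sdiff.mpr ⟨Finset.mem_univ v, hvA⟩, Sym2.mem_mk_right u v⟩
        · exact ⟨u, Finset.mem_sdiff.mpr ⟨Finset.mem_univ u, huA⟩, Sym2.mem_mk_left u v⟩
    have h1 : N.card ≤ C.card := matching_card_le N hN.2 C hcover
    have h2 : (M ∪ Mimg).card = M.card + Mimg.card := Finset.card_union_of_disjoint hdisjMM
    have h3 : D.card = C.card - NS.card := Finset.card_sdiff_of_subset hNSC
    have h4 : NS.card ≤ C.card := Finset.card_le_card hNSC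
    omega
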